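/- Let d ≥ 2, L ≥ 1, m_ℓ ≥ 1 for ℓ ∈ [L], M := ∑_ℓ m_ℓ, U > 0, ε > 0, and let T be the ⌈2d/ε⌉-th largest value of the multiset {U·m_1, …, U·m_L} (with T := 0 if ⌈2d/ε⌉ > L). Then the minimum of the worst-case error functional E^{(d)} over all admissible clipping strategies equals (1/M)·(∑_{ℓ≤L} max{U·m_ℓ − T, 0} + 2dT/ε). -/

import Mathlib

open Finset

noncomputable def kthLargest {L : ℕ} (v : Fin L → ℝ) (k : ℕ) : ℝ :=
  (((Finset.univ.val.map v).sort (· ≤ ·)).reverse).getD (k - 1) 0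

/-- An admissible clipping strategy: `0 ≤ a ℓ j ≤ b ℓ j ≤ U` for every user `ℓ`
and sample index `j`. -/
def Admissible {L : ℕ} (m : Fin L → ℕ) (U : ℝ)
    (a b : (ℓ : Fin L) → Fin (m ℓ) → ℝ) : Prop :=
  ∀ ℓ j, 0 ≤ a ℓ j ∧ a ℓ j ≤ b ℓ j ∧ b ℓ j ≤ U

/-- The worst-case error functional `E^(d)` of a clipping strategy (dimension `d ≥ 2`). -/
noncomputable def Ed {L : ℕ} (d : ℕ) (m : Fin L → ℕ) (U ε : ℝ)
    (a b : (ℓ : Fin L) → Fin (m ℓ) → ℝ) : ℝ :=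
  (1 / ∑ ℓ, (m ℓ : ℝ)) *
    ((∑ ℓ, ∑ j, max (a ℓ j) (U - b ℓ j)) +
      (2 * (d : ℝ) / ε) * sSup (Set.range fun ℓ => ∑ j, b ℓ j))

/-- optimal worst-case error, `d ≥ 2`.
The minimum of `E^(d)` over all admissible clipping strategies equals
`(1/M)·(∑_ℓ max{U m_ℓ − T, 0} + 2dT/ε)`, where `T` is the `⌈2d/ε⌉`-th largest value of
`{U·m_1, …, U·m_L}` (with `T = 0` if `⌈2d/ε⌉ > L`). -/
private lemma sorted_countP_ge (l : List ℝ) (hl : l.Pairwise (· ≤ ·)) (n : ℕ) (hn : n < l.length)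
    (T : ℝ) (hT : T = l[n]) :
    l.length - n ≤ l.countP (fun x => decide (T ≤ x)) := by
  have hall : ∀ x ∈ l.drop n, T ≤ x := by
    intro x hx
    obtain ⟨j, hj, rfl⟩ := List.getElem_of_mem hx
    have hj' : n + j < l.length := by rw [List.length_drop] at hj; omega
    rw [List.getElem_drop]
    rcases Nat.eq_zero_or_pos j with h | h
    · subst h; rw [hT]; simp
    · have := hl.rel_get_of_lt (a := ⟨n, hn⟩) (b := ⟨n + j, hj'⟩) (by simpa using by omega)
      simp only [List.get_eq_getElem] at this
      rw [hT]; exact this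
  have hdrop : (l.drop n).countP (fun x => decide (T ≤ x)) = (l.drop n).length :=
    List.countP_eq_length.2 (fun a ha => by simpa using hall a ha)
  calc l.length - n = (l.drop n).length := List.length_drop.symm
    _ = (l.drop n).countP (fun x => decide (T ≤ x)) := hdrop.symm
    _ ≤ (l.take n).countP (fun x => decide (T ≤ x)) + (l.drop n).countP (fun x => decide (T ≤ x)) := Nat.le_add_left _ _
    _ = l.countP (fun x => decide (T ≤ x)) := by rw [← List.countP_append, List.take_append_drop]

private lemma sorted_countP_gt (l : List ℝ) (hl : l.Pairwise (· ≤ ·)) (n : ℕ) (hn : n < l.length)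
    (T : ℝ) (hT : T = l[n]) :
    l.countP (fun x => decide (T < x)) ≤ l.length - n - 1 := by
  have hall : ∀ x ∈ l.take (n+1), ¬ T < x := by
    intro x hx
    obtain ⟨j, hj, rfl⟩ := List.getElem_of_mem hx
    have hj2 : j ≤ n := by simp [List.length_take, lt_min_iff] at hj; omega
    have hjl : j < l.length := by omega
    rw [List.getElem_take]
    rcases Nat.lt_or_ge j n with h | h
    · have := hl.rel_get_of_lt (a := ⟨j, hjl⟩) (b := ⟨n, hn⟩) (by simpa using h)
      simp only [List.get_eq_getElem] at this
      rw [hT]; exact not_lt.2 this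
    · have hjn : j = n := le_antisymm hj2 h
      subst hjn; rw [hT]; exact lt_irrefl _
  have htake : (l.take (n+1)).countP (fun x => decide (T < x)) = 0 :=
    List.countP_eq_zero.2 (fun a ha => by simpa using hall a ha)
  calc l.countP (fun x => decide (T < x))
      = (l.take (n+1)).countP (fun x => decide (T < x)) + (l.drop (n+1)).countP (fun x => decide (T < x)) := by
        rw [← List.countP_append, List.take_append_drop]
    _ = (l.drop (n+1)).countP (fun x => decide (T < x)) := by rw [htake, Nat.zero_add]
    _ ≤ (l.drop (n+1)).length := List.countP_le_length
    _ = l.length - n - 1 := by rw [List.length_drop]; omega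


section kth
variable {L : ℕ} (v : Fin L → ℝ) (k : ℕ)

private lemma klen : ((Finset.univ.val.map v).sort (· ≤ ·)).length = L := by
  rw [Multiset.length_sort]; simp

private lemma kzero (h : L < k) : kthLargest v k = 0 := by
  unfold kthLargest
  apply List.getD_eq_default
  rw [List.length_reverse, klen]; omega

private lemma kmem (hk : 1 ≤ k) (hkL : k ≤ L) : ∃ ℓ, kthLargest v k = v ℓ := by
  have hlt : k - 1 < ((Finset.univ.val.map v).sort (· ≤ ·)).reverse.length := by
    rw [List.length_reverse, klen]; omega
  have : kthLargest v k ∈ ((Finset.univ.val.map v).sort (· ≤ ·)).reverse := by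
    unfold kthLargest
    rw [List.getD_eq_getElem _ _ hlt]
    exact List.getElem_mem hlt
  rw [List.mem_reverse, Multiset.mem_sort, Multiset.mem_map] at this
  obtain ⟨ℓ, _, h⟩ := this
  exact ⟨ℓ, h.symm⟩

private lemma keq (hk : 1 ≤ k) (hkL : k ≤ L) :
    kthLargest v k = ((Finset.univ.val.map v).sort (· ≤ ·))[L - k]'(by rw [klen]; omega) := by
  have hlt : k - 1 < ((Finset.univ.val.map v).sort (· ≤ ·)).reverse.length := by
    rw [List.length_reverse, klen]; omega
  unfold kthLargest
  rw [List.getD_eq_getElem _ _ hlt, List.getElem_reverse]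
  congr 1
  rw [klen]
  omega

private lemma kcount_eq (T : ℝ) [DecidablePred (fun x : ℝ => T ≤ x)] :
    (Finset.univ.filter (fun ℓ => T ≤ v ℓ)).card
      = ((Finset.univ.val.map v).sort (· ≤ ·)).countP (fun x => decide (T ≤ x)) := by
  have h1 : (Finset.univ.filter (fun ℓ => T ≤ v ℓ)).card
      = Multiset.countP (fun x => T ≤ x) (Finset.univ.val.map v) := by
    rw [Multiset.countP_map]; rfl
  rw [h1, ← Multiset.coe_countP]
  congr 1
  exact (Multiset.sort_eq _ _).symm

private lemma kcount_eq' (T : ℝ) [DecidablePred (fun x : ℝ => T < x)] :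
    (Finset.univ.filter (fun ℓ => T < v ℓ)).card
      = ((Finset.univ.val.map v).sort (· ≤ ·)).countP (fun x => decide (T < x)) := by
  have h1 : (Finset.univ.filter (fun ℓ => T < v ℓ)).card
      = Multiset.countP (fun x => T < x) (Finset.univ.val.map v) := by
    rw [Multiset.countP_map]; rfl
  rw [h1, ← Multiset.coe_countP]
  congr 1
  exact (Multiset.sort_eq _ _).symm

end kth

section kth2
variable {L : ℕ} (v : Fin L → ℝ) (k : ℕ)

private lemma kge (hk : 1 ≤ k) (hkL : k ≤ L) :
    k ≤ (Finset.univ.filter (fun ℓ => kthLargest v k ≤ v ℓ)).card := by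
  rw [kcount_eq]
  have hlen := klen v
  have := sorted_countP_ge ((Finset.univ.val.map v).sort (· ≤ ·))
    (Multiset.pairwise_sort _ _) (L - k) (by omega) (kthLargest v k) (keq v k hk hkL)
  omega

private lemma kgt (hk : 1 ≤ k) (hkL : k ≤ L) :
    (Finset.univ.filter (fun ℓ => kthLargest v k < v ℓ)).card ≤ k - 1 := by
  rw [kcount_eq']
  have hlen := klen v
  have := sorted_countP_gt ((Finset.univ.val.map v).sort (· ≤ ·))
    (Multiset.pairwise_sort _ _) (L - k) (by omega) (kthLargest v k) (keq v k hk hkL)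
  omega

private lemma knonneg (hv : ∀ ℓ, 0 ≤ v ℓ) (hk : 1 ≤ k) : 0 ≤ kthLargest v k := by
  rcases Nat.lt_or_ge L k with h | h
  · rw [kzero v k h]
  · obtain ⟨ℓ, hℓ⟩ := kmem v k hk h
    rw [hℓ]; exact hv ℓ

end kth2

private lemma fmin {L : ℕ} (hL : 0 < L) (v : Fin L → ℝ) (hv : ∀ ℓ, 0 < v ℓ)
    (c : ℝ) (hc : 0 < c) (T : ℝ) (hT : T = kthLargest v ⌈c⌉₊) (S : ℝ) (hS : 0 ≤ S) :
    (∑ ℓ, max (v ℓ - T) 0) + c * T ≤ (∑ ℓ, max (v ℓ - S) 0) + c * S := by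
  classical
  set k := ⌈c⌉₊ with hk
  have hk1 : 1 ≤ k := Nat.one_le_iff_ne_zero.2 (by positivity)
  rcases le_or_gt T S with hTS | hTS
  · -- S ≥ T
    set N := (Finset.univ.filter (fun ℓ => T < v ℓ)).card with hN
    have hNc : (N : ℝ) ≤ c := by
      rcases le_or_gt k L with h | h
      · have h1 : N ≤ k - 1 := by
          have h0 := kgt v k hk1 h
          rw [← hT] at h0
          exact h0
        have h2 : (k : ℝ) < c + 1 := Nat.ceil_lt_add_one hc.le
        have h3 : (N : ℝ) ≤ (k : ℝ) - 1 := by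
          have : ((k - 1 : ℕ) : ℝ) = (k : ℝ) - 1 := by
            push_cast [Nat.cast_sub hk1]; ring
          rw [← this]; exact_mod_cast h1
        linarith
      · have h1 : N ≤ L := le_trans (Finset.card_filter_le _ _) (by simp)
        have h2 : (L : ℝ) < c := by exact_mod_cast Nat.lt_ceil.1 h
        have : (N : ℝ) ≤ (L : ℝ) := by exact_mod_cast h1
        linarith
    have hpt : ∀ ℓ ∈ Finset.univ, max (v ℓ - T) 0 - (if T < v ℓ then S - T else 0)
        ≤ max (v ℓ - S) 0 := by
      intro ℓ _
      by_cases h : T < v ℓ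
      · simp only [h, if_pos]
        have : max (v ℓ - T) 0 = v ℓ - T := max_eq_left (by linarith)
        rw [this]
        calc v ℓ - T - (S - T) = v ℓ - S := by ring
          _ ≤ max (v ℓ - S) 0 := le_max_left _ _
      · simp only [h, if_neg, not_false_iff, sub_zero]
        have : max (v ℓ - T) 0 = 0 := max_eq_right (by push_neg at h; linarith)
        rw [this]; exact le_max_right _ _
    have hsum := Finset.sum_le_sum hpt
    rw [Finset.sum_sub_distrib] at hsum
    have hite : ∑ ℓ, (if T < v ℓ then S - T else 0) = (N : ℝ) * (S - T) := by
      rw [Finset.sum_ite, Finset.sum_const, Finset.sum_const_zero, add_zero,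
        nsmul_eq_mul]
    rw [hite] at hsum
    nlinarith [mul_le_mul_of_nonneg_right hNc (sub_nonneg.2 hTS)]
  · -- S < T
    have hkL : k ≤ L := by
      by_contra h
      push_neg at h
      rw [hT, kzero v k h] at hTS
      linarith
    set N := (Finset.univ.filter (fun ℓ => T ≤ v ℓ)).card with hN
    have hcN : c ≤ (N : ℝ) := by
      have h1 : k ≤ N := by
        have h0 := kge v k hk1 hkL
        rw [← hT] at h0
        exact h0
      have h2 : c ≤ (k : ℝ) := Nat.le_ceil c
      have : (k : ℝ) ≤ (N : ℝ) := by exact_mod_cast h1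
      linarith
    have hpt : ∀ ℓ ∈ Finset.univ, max (v ℓ - T) 0 + (if T ≤ v ℓ then T - S else 0)
        ≤ max (v ℓ - S) 0 := by
      intro ℓ _
      by_cases h : T ≤ v ℓ
      · simp only [h, if_pos]
        have h1 : max (v ℓ - T) 0 = v ℓ - T := max_eq_left (by linarith)
        have h2 : max (v ℓ - S) 0 = v ℓ - S := max_eq_left (by linarith)
        rw [h1, h2]; ring_nf; exact le_refl _
      · simp only [h, if_neg, not_false_iff, add_zero]
        exact max_le_max (by linarith) (le_refl 0)
    have hsum := Finset.sum_le_sum hpt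
    rw [Finset.sum_add_distrib] at hsum
    have hite : ∑ ℓ, (if T ≤ v ℓ then T - S else 0) = (N : ℝ) * (T - S) := by
      rw [Finset.sum_ite, Finset.sum_const, Finset.sum_const_zero, add_zero,
        nsmul_eq_mul]
    rw [hite] at hsum
    nlinarith [mul_le_mul_of_nonneg_right hcN (sub_nonneg.2 hTS.le)]

/-- optimal worst-case error, `d ≥ 2`.
The minimum of `E^(d)` over all admissible clipping strategies equals
`(1/M)·(∑_ℓ max{U m_ℓ − T, 0} + 2dT/ε)`, where `T` is the `⌈2d/ε⌉`-th largest value of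
`{U·m_1, …, U·m_L}` (with `T = 0` if `⌈2d/ε⌉ > L`). -/
theorem stmt3 {d L : ℕ} (hd : 2 ≤ d) (hL : 0 < L) (m : Fin L → ℕ) (hm : ∀ ℓ, 1 ≤ m ℓ)
    (U ε : ℝ) (hU : 0 < U) (hε : 0 < ε)
    (T : ℝ) (hT : T = kthLargest (fun ℓ => U * (m ℓ : ℝ)) ⌈(2 * (d : ℝ)) / ε⌉₊) :
    IsLeast {e : ℝ | ∃ a b, Admissible m U a b ∧ e = Ed d m U ε a b}
      ((1 / ∑ ℓ, (m ℓ : ℝ)) *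
        ((∑ ℓ, max (U * (m ℓ : ℝ) - T) 0) + 2 * (d : ℝ) * T / ε)) := by
  classical
  set v : Fin L → ℝ := fun ℓ => U * (m ℓ : ℝ) with hv
  have hvpos : ∀ ℓ, 0 < v ℓ := fun ℓ => by
    have : (0:ℝ) < (m ℓ : ℝ) := by exact_mod_cast hm ℓ
    positivity
  set c : ℝ := 2 * (d : ℝ) / ε with hc
  have hcpos : 0 < c := by positivity
  set k : ℕ := ⌈c⌉₊ with hkdef
  have hk1 : 1 ≤ k := Nat.one_le_iff_ne_zero.2 (by positivity)
  have hT0 : 0 ≤ T := hT ▸ knonneg _ k (fun ℓ => (hvpos ℓ).le) hk1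
  set M : ℝ := ∑ ℓ, (m ℓ : ℝ) with hM
  have hMpos : 0 < M := Finset.sum_pos (fun ℓ _ => by exact_mod_cast hm ℓ) ⟨⟨0, hL⟩, Finset.mem_univ _⟩
  have ℓ0 : Fin L := ⟨0, hL⟩
  -- existence of ℓ0 with T ≤ v ℓ0
  have hex : ∃ ℓ, T ≤ v ℓ := by
    rcases le_or_gt k L with h | h
    · obtain ⟨ℓ, hℓ⟩ := kmem v k hk1 h
      exact ⟨ℓ, by rw [hT, hℓ]⟩
    · have : T = 0 := by rw [hT]; exact kzero v k h
      exact ⟨ℓ0, this ▸ (hvpos ℓ0).le⟩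
  constructor
  · -- membership: the optimal strategy
    refine ⟨fun ℓ _ => 0, fun ℓ _ => min T (v ℓ) / (m ℓ : ℝ), ?_, ?_⟩
    · intro ℓ j
      have hm' : (0:ℝ) < (m ℓ : ℝ) := by exact_mod_cast hm ℓ
      refine ⟨le_refl _, div_nonneg (le_min hT0 (hvpos ℓ).le) hm'.le, ?_⟩
      rw [div_le_iff₀ hm']
      calc min T (v ℓ) ≤ v ℓ := min_le_right _ _
        _ = U * (m ℓ : ℝ) := rfl
    · unfold Ed
      have hm' : ∀ ℓ, (0:ℝ) < (m ℓ : ℝ) := fun ℓ => by exact_mod_cast hm ℓ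
      have hbsum : ∀ ℓ : Fin L, (∑ _j : Fin (m ℓ), min T (v ℓ) / (m ℓ : ℝ)) = min T (v ℓ) := by
        intro ℓ
        rw [Finset.sum_const, Finset.card_univ, Fintype.card_fin, nsmul_eq_mul,
          mul_div_cancel₀ _ (hm' ℓ).ne']
      have hsup : sSup (Set.range fun ℓ => ∑ _j : Fin (m ℓ), min T (v ℓ) / (m ℓ : ℝ)) = T := by
        apply IsGreatest.csSup_eq
        constructor
        · obtain ⟨ℓ, hℓ⟩ := hex
          refine ⟨ℓ, ?_⟩
          show (∑ _j : Fin (m ℓ), min T (v ℓ) / (m ℓ : ℝ)) = T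
          rw [hbsum ℓ, min_eq_left hℓ]
        · rintro x ⟨ℓ, rfl⟩
          show (∑ _j : Fin (m ℓ), min T (v ℓ) / (m ℓ : ℝ)) ≤ T
          rw [hbsum ℓ]
          exact min_le_left _ _
      have hin : ∀ ℓ : Fin L, (∑ _j : Fin (m ℓ), max (0:ℝ) (U - min T (v ℓ) / (m ℓ : ℝ)))
          = max (v ℓ - T) 0 := by
        intro ℓ
        have hble : min T (v ℓ) / (m ℓ : ℝ) ≤ U := by
          rw [div_le_iff₀ (hm' ℓ)]
          exact min_le_right _ _
        have : max (0:ℝ) (U - min T (v ℓ) / (m ℓ : ℝ)) = U - min T (v ℓ) / (m ℓ : ℝ) :=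
          max_eq_right (by linarith)
        rw [this, Finset.sum_const, Finset.card_univ, Fintype.card_fin, nsmul_eq_mul,
          mul_sub, mul_div_cancel₀ _ (hm' ℓ).ne']
        have hveq : ((m ℓ : ℝ)) * U = v ℓ := mul_comm _ _
        rw [hveq]
        rcases le_total T (v ℓ) with h | h
        · rw [min_eq_left h, max_eq_left (by linarith)]
        · rw [min_eq_right h, max_eq_right (by linarith), sub_self]
      beta_reduce
      rw [hsup, Finset.sum_congr rfl (fun ℓ (_ : ℓ ∈ Finset.univ) => hin ℓ)]
      ring
  · -- lower bound
    rintro e ⟨a, b, hab, rfl⟩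
    set B : Fin L → ℝ := fun ℓ => ∑ j, b ℓ j with hB
    set S : ℝ := sSup (Set.range B) with hSdef
    have hB0 : ∀ ℓ, 0 ≤ B ℓ := fun ℓ =>
      Finset.sum_nonneg fun j _ => le_trans (hab ℓ j).1 (hab ℓ j).2.1
    have hBle : ∀ ℓ, B ℓ ≤ S := fun ℓ =>
      le_csSup (Set.Finite.bddAbove (Set.finite_range B)) (Set.mem_range_self ℓ)
    have hS0 : 0 ≤ S := le_trans (hB0 ℓ0) (hBle ℓ0)
    have hA : ∀ ℓ : Fin L, max (v ℓ - S) 0 ≤ ∑ j, max (a ℓ j) (U - b ℓ j) := by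
      intro ℓ
      have h1 : v ℓ - B ℓ ≤ ∑ j, max (a ℓ j) (U - b ℓ j) := by
        have : ∀ j ∈ Finset.univ, U - b ℓ j ≤ max (a ℓ j) (U - b ℓ j) :=
          fun j _ => le_max_right _ _
        have h2 := Finset.sum_le_sum this
        rw [Finset.sum_sub_distrib, Finset.sum_const, Finset.card_univ, Fintype.card_fin,
          nsmul_eq_mul] at h2
        calc v ℓ - B ℓ = (m ℓ : ℝ) * U - B ℓ := by
              have hveq : v ℓ = U * (m ℓ : ℝ) := rfl
              rw [hveq]; ring
          _ ≤ _ := h2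
      have h0 : (0:ℝ) ≤ ∑ j, max (a ℓ j) (U - b ℓ j) :=
        Finset.sum_nonneg fun j _ => le_trans (hab ℓ j).1 (le_max_left _ _)
      apply max_le _ h0
      linarith [hBle ℓ]
    have hfm := fmin hL v hvpos c hcpos T (by rw [hT, hkdef]) S hS0
    unfold Ed
    rw [← hM]
    have hmain : (∑ ℓ, max (v ℓ - T) 0) + c * T
        ≤ (∑ ℓ, ∑ j, max (a ℓ j) (U - b ℓ j)) + c * S := by
      have := Finset.sum_le_sum (fun ℓ (_ : ℓ ∈ Finset.univ) => hA ℓ)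
      linarith
    have h2dT : 2 * (d : ℝ) * T / ε = c * T := by rw [hc]; ring
    rw [h2dT]
    apply mul_le_mul_of_nonneg_left _ (by positivity : (0:ℝ) ≤ 1 / M)
    exact hmain
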